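/- Let p = log_3(27/4). The equation u = 1 + (u/2)^(1/(p−1)) in u > 0 has exactly two solutions: u = 2 and one solution with u > 2. -/

import Mathlib

open Real Set

theorem stmt_11 :
    ∃ u₀ : ℝ, 2 < u₀ ∧
      {u : ℝ | 0 < u ∧
        u = 1 + (u / 2) ^ (1 / (Real.log (27 / 4) / Real.log 3 - 1))}
        = {2, u₀} := by
  set q : ℝ := Real.log 3 / Real.log (9 / 4) with hqdef
  have hlog3 : 0 < Real.log 3 := Real.log_pos (by norm_num)
  have h94 : 0 < Real.log (9 / 4) := Real.log_pos (by norm_num)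
  have hqe : 1 / (Real.log (27 / 4) / Real.log 3 - 1) = q := by
    have h27 : Real.log (27 / 4) = Real.log (9 / 4) + Real.log 3 := by
      rw [← Real.log_mul (by norm_num) (by norm_num)]; norm_num
    rw [hqdef, h27]
    field_simp
    rw [add_sub_cancel_right, div_self h94.ne']
  have hq1 : 1 < q :=
    (one_lt_div h94).2 (Real.log_lt_log (by norm_num) (by norm_num))
  have hq0 : 0 < q := lt_trans one_pos hq1
  have h2q : (0:ℝ) < (2:ℝ) ^ q := Real.rpow_pos_of_pos (by norm_num) q
  set c : ℝ := ((2:ℝ) ^ q)⁻¹ with hcdef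
  have hc : 0 < c := inv_pos.2 h2q
  have hc2 : c * (2:ℝ) ^ q = 1 := inv_mul_cancel₀ (ne_of_gt h2q)
  set f : ℝ → ℝ := fun u => c * u ^ q + (1 - u) with hfdef
  -- strict convexity of f on [0, ∞)
  have hsc : StrictConvexOn ℝ (Set.Ici 0) f := by
    constructor
    · exact convex_Ici 0
    · intro x hx y hy hne a b ha hb hab
      have h := (strictConvexOn_rpow hq1).2 hx hy hne ha hb hab
      simp only [smul_eq_mul] at h ⊢
      have h' := mul_lt_mul_of_pos_left h hc
      simp only [hfdef]
      nlinarith [h']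
  -- values of f
  have hf2 : f 2 = 0 := by simp only [hfdef]; rw [hc2]; ring
  have hf10 : f 10 < 0 := by
    have h10 : (10:ℝ) ^ q = 2 ^ q * 5 ^ q := by
      rw [← Real.mul_rpow (by norm_num) (by norm_num)]; norm_num
    have h5 : (5:ℝ) ^ q < 9 := by
      rw [Real.rpow_def_of_pos (by norm_num : (0:ℝ) < 5)]
      rw [show (9:ℝ) = Real.exp (Real.log 9) from (Real.exp_log (by norm_num)).symm]
      rw [Real.exp_lt_exp]
      have h9 : Real.log 9 = 2 * Real.log 3 := by
        rw [show (9:ℝ) = 3 ^ 2 by norm_num, Real.log_pow]; push_cast; ring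
      have hkey : Real.log 5 < 2 * Real.log (9 / 4) := by
        rw [show 2 * Real.log (9/4) = Real.log ((9/4) ^ 2) by
          rw [Real.log_pow]; push_cast; ring]
        exact Real.log_lt_log (by norm_num) (by norm_num)
      rw [h9, hqdef, ← mul_div_assoc, div_lt_iff₀ h94]
      nlinarith [mul_lt_mul_of_pos_right hkey hlog3]
    have : f 10 = c * (2 ^ q * 5 ^ q) + (1 - 10) := by simp only [hfdef, h10]
    rw [this, ← mul_assoc, hc2]
    nlinarith
  have hf16 : 0 < f 16 := by
    have h16 : (16:ℝ) ^ q = 2 ^ q * 8 ^ q := by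
      rw [← Real.mul_rpow (by norm_num) (by norm_num)]; norm_num
    have h8 : (16:ℝ) ≤ (8:ℝ) ^ q := by
      rw [Real.rpow_def_of_pos (by norm_num : (0:ℝ) < 8)]
      rw [show (16:ℝ) = Real.exp (Real.log 16) from (Real.exp_log (by norm_num)).symm]
      rw [Real.exp_le_exp]
      have hlog2 : 0 < Real.log 2 := Real.log_pos (by norm_num)
      have h8l : Real.log 8 = 3 * Real.log 2 := by
        rw [show (8:ℝ) = 2 ^ 3 by norm_num, Real.log_pow]; push_cast; ring
      have h16l : Real.log 16 = 4 * Real.log 2 := by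
        rw [show (16:ℝ) = 2 ^ 4 by norm_num, Real.log_pow]; push_cast; ring
      have hkey : 4 * Real.log (9 / 4) ≤ 3 * Real.log 3 := by
        rw [show 4 * Real.log (9/4) = Real.log ((9/4) ^ 4) by
            rw [Real.log_pow]; push_cast; ring,
          show 3 * Real.log 3 = Real.log (3 ^ 3) by
            rw [Real.log_pow]; push_cast; ring]
        exact Real.log_le_log (by norm_num) (by norm_num)
      rw [h8l, h16l, hqdef, ← mul_div_assoc, le_div_iff₀ h94]
      nlinarith [mul_le_mul_of_nonneg_right hkey hlog2.le]
    have : f 16 = c * (2 ^ q * 8 ^ q) + (1 - 16) := by simp only [hfdef, h16]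
    rw [this, ← mul_assoc, hc2]
    nlinarith
  -- continuity and IVT
  have hcont : Continuous f := by
    apply Continuous.add
    · exact continuous_const.mul (continuous_id.rpow_const fun x => Or.inr hq0.le)
    · exact continuous_const.sub continuous_id
  obtain ⟨u₀, hu₀mem, hfu₀⟩ :=
    intermediate_value_Icc (by norm_num : (10:ℝ) ≤ 16) hcont.continuousOn
      (Set.mem_Icc.2 ⟨hf10.le, hf16.le⟩)
  have hu₀10 : (10:ℝ) ≤ u₀ := hu₀mem.1
  have hu₀2 : (2:ℝ) < u₀ := by linarith
  -- key convexity inequality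
  have key : ∀ x z y : ℝ, 0 ≤ x → x < z → z < y →
      f z < (y - z) / (y - x) * f x + (z - x) / (y - x) * f y := by
    intro x z y hx hxz hzy
    have hxy : x < y := hxz.trans hzy
    have hyx : (0:ℝ) < y - x := by linarith
    have ha : 0 < (y - z) / (y - x) := div_pos (by linarith) hyx
    have hb : 0 < (z - x) / (y - x) := div_pos (by linarith) hyx
    have hab : (y - z) / (y - x) + (z - x) / (y - x) = 1 := by
      field_simp
      ring
    have hcomb : ((y - z) / (y - x)) • x + ((z - x) / (y - x)) • y = z := by
      simp only [smul_eq_mul]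
      field_simp
      ring
    have h := hsc.2 (mem_Ici.2 hx) (mem_Ici.2 (hx.trans hxy.le)) (ne_of_lt hxy) ha hb hab
    rw [hcomb] at h
    simpa [smul_eq_mul] using h
  -- membership characterization
  have hmem : ∀ u : ℝ, 0 < u →
      (u = 1 + (u / 2) ^ (1 / (Real.log (27 / 4) / Real.log 3 - 1)) ↔ f u = 0) := by
    intro u hu
    rw [hqe]
    have hdiv : (u / 2) ^ q = c * u ^ q := by
      rw [Real.div_rpow hu.le (by norm_num), hcdef, div_eq_inv_mul, mul_comm]
    rw [hdiv]
    simp only [hfdef]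
    constructor <;> intro h <;> linarith
  refine ⟨u₀, hu₀2, ?_⟩
  ext u
  simp only [mem_setOf_eq, mem_insert_iff, mem_singleton_iff]
  constructor
  · rintro ⟨hu, heq⟩
    have hfu : f u = 0 := (hmem u hu).1 heq
    rcases lt_trichotomy u 2 with h | h | h
    · exfalso
      have := key u 2 u₀ hu.le h (by linarith)
      rw [hf2, hfu, hfu₀] at this
      simp at this
    · exact Or.inl h
    · rcases lt_trichotomy u u₀ with h' | h' | h'
      · exfalso
        have := key 2 u u₀ (by norm_num) h h'
        rw [hf2, hfu, hfu₀] at this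
        simp at this
      · exact Or.inr h'
      · exfalso
        have := key 2 u₀ u (by norm_num) hu₀2 h'
        rw [hf2, hfu, hfu₀] at this
        simp at this
  · rintro (rfl | rfl)
    · exact ⟨by norm_num, (hmem 2 (by norm_num)).2 hf2⟩
    · exact ⟨by linarith, (hmem _ (by linarith)).2 hfu₀⟩
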